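/- Let H be a real inner product space, X ⊆ H, S > 0 and ε > 0, and let F be a function class with F ⊆ B(S). If x ∈ X is ε'-independent of a finite list S = {x_1,…,x_n} ⊆ X with respect to F for some ε' ≥ ε, then the increment of information gain satisfies Δγ((ε/(2S))²; x | S) > log(3/2). -/

import Mathlib

open scoped RealInnerProductSpace BigOperators

/-- Gram matrix `(K_T)_{ij} = ⟪x_i, x_j⟫` of a tuple of points. -/
noncomputable def gram {H : Type*} [NormedAddCommGroup H] [InnerProductSpace ℝ H]
    {T : ℕ} (x : Fin T → H) : Matrix (Fin T) (Fin T) ℝ :=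
  Matrix.of fun i j => ⟪x i, x j⟫

/-- Information gain `γ(λ; x_1,…,x_T) = log det (I + λ⁻¹ K_T)`. -/
noncomputable def infoGain {H : Type*} [NormedAddCommGroup H] [InnerProductSpace ℝ H]
    (lam : ℝ) {T : ℕ} (x : Fin T → H) : ℝ :=
  Real.log (1 + lam⁻¹ • gram x).det

/-- The ball of radius `S` in the RKHS: `B(S) = {x ↦ ⟪θ, x⟫ : ‖θ‖ ≤ S}`. -/
def rkhsBall {H : Type*} [NormedAddCommGroup H] [InnerProductSpace ℝ H] (S : ℝ) :
    Set (H → ℝ) :=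
  {f | ∃ θ : H, ‖θ‖ ≤ S ∧ f = fun x => ⟪θ, x⟫}

/-- `x` is `ε`-dependent on `x_1,…,x_n` w.r.t. `F` if every `f, g ∈ F` with
`∑ᵢ (f xᵢ - g xᵢ)² ≤ ε²` also satisfy `f x - g x ≤ ε`. -/
def epsDependent {H : Type*} [NormedAddCommGroup H] [InnerProductSpace ℝ H]
    (F : Set (H → ℝ)) (ε : ℝ) (x : H) {n : ℕ} (xs : Fin n → H) : Prop :=
  ∀ f ∈ F, ∀ g ∈ F, (∑ i, (f (xs i) - g (xs i)) ^ 2 ≤ ε ^ 2) → f x - g x ≤ ε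

/-- Increment of information gain `Δγ(λ; x | x_1,…,x_n)`. -/
noncomputable def incrGain {H : Type*} [NormedAddCommGroup H] [InnerProductSpace ℝ H]
    (lam : ℝ) (x : H) {n : ℕ} (xs : Fin n → H) : ℝ :=
  infoGain lam (Fin.cons x xs) - infoGain lam xs


lemma gram_posSemidef {H : Type*} [NormedAddCommGroup H] [InnerProductSpace ℝ H]
    {T : ℕ} (x : Fin T → H) : (gram x).PosSemidef := by
  rw [Matrix.posSemidef_iff_dotProduct_mulVec]
  constructor
  · ext i j
    simp [gram, Matrix.conjTranspose, real_inner_comm]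
  · intro v
    have : dotProduct (star v) ((gram x).mulVec v) = ⟪∑ i, v i • x i, ∑ j, v j • x j⟫ := by
      simp [gram, dotProduct, Matrix.mulVec, sum_inner, inner_sum,
        real_inner_smul_left, real_inner_smul_right, Finset.mul_sum, mul_assoc, -inner_self_eq_norm_sq_to_K]
      exact Finset.sum_congr rfl fun a _ => Finset.sum_congr rfl fun b _ => by
        rw [real_inner_comm]; ring
    rw [this]
    exact real_inner_self_nonneg

lemma smul_one_posDef {n : ℕ} {c : ℝ} (hc : 0 < c) :
    (c • (1 : Matrix (Fin n) (Fin n) ℝ)).PosDef := by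
  rw [Matrix.smul_one_eq_diagonal, Matrix.posDef_diagonal_iff]
  exact fun _ => hc

def consEquiv (n : ℕ) : (Unit ⊕ Fin n) ≃ Fin (n + 1) where
  toFun := Sum.elim (fun _ => 0) Fin.succ
  invFun := Fin.cases (Sum.inl ()) Sum.inr
  left_inv := by rintro (⟨⟩ | i) <;> simp
  right_inv := by
    intro i
    induction i using Fin.cases <;> simp

lemma schur_det {H : Type*} [NormedAddCommGroup H] [InnerProductSpace ℝ H]
    {n : ℕ} (lam : ℝ) (x : H) (xs : Fin n → H)
    (hPn : (lam • (1 : Matrix (Fin n) (Fin n) ℝ) + gram xs).PosDef) :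
    (lam • (1 : Matrix (Fin (n+1)) (Fin (n+1)) ℝ) + gram (Fin.cons x xs)).det
      = (lam • (1 : Matrix (Fin n) (Fin n) ℝ) + gram xs).det *
        (lam + (⟪x, x⟫ - dotProduct (fun i => ⟪x, xs i⟫)
          ((lam • (1 : Matrix (Fin n) (Fin n) ℝ) + gram xs)⁻¹.mulVec (fun i => ⟪x, xs i⟫)))) := by
  set Pn := lam • (1 : Matrix (Fin n) (Fin n) ℝ) + gram xs with hPndef
  set P := lam • (1 : Matrix (Fin (n+1)) (Fin (n+1)) ℝ) + gram (Fin.cons x xs) with hPdef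
  set k : Fin n → ℝ := fun i => ⟪x, xs i⟫ with hk
  have hdet : IsUnit Pn.det := isUnit_iff_ne_zero.mpr hPn.det_pos.ne'
  haveI : Invertible Pn := Pn.invertibleOfIsUnitDet hdet
  have hblock : P.submatrix (consEquiv n) (consEquiv n) =
      Matrix.fromBlocks (Matrix.of fun _ _ : Unit => lam + ⟪x, x⟫)
        (Matrix.of fun (_ : Unit) j => k j)
        (Matrix.of fun i (_ : Unit) => k i) Pn := by
    ext i j
    rcases i with i | i <;> rcases j with j | j <;>
      simp [hPdef, hPndef, consEquiv, Matrix.fromBlocks, Matrix.submatrix, gram,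
        Matrix.one_apply, Fin.succ_ne_zero, (Fin.succ_ne_zero _).symm, hk,
        real_inner_comm x]
  have h1 : P.det = (P.submatrix (consEquiv n) (consEquiv n)).det :=
    (Matrix.det_submatrix_equiv_self _ _).symm
  rw [h1, hblock, Matrix.det_fromBlocks₂₂]
  congr 1
  rw [Matrix.det_unique]
  have hinv : (⅟Pn : Matrix (Fin n) (Fin n) ℝ) = Pn⁻¹ := Matrix.invOf_eq_nonsing_inv Pn
  rw [hinv]
  show (lam + ⟪x, x⟫) - _ = _
  rw [add_sub_assoc]
  congr 1
  simp [Matrix.mul_apply, Matrix.mulVec, dotProduct, Finset.sum_mul, Finset.mul_sum]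
  rw [Finset.sum_comm]
  exact Finset.sum_congr rfl fun a _ => Finset.sum_congr rfl fun b _ => by ring


set_option maxHeartbeats 1000000 in
/-- **Lemma 1.** If `F ⊆ B(S)` and `x ∈ X` is `ε'`-independent of `x_1,…,x_n ⊆ X`
w.r.t. `F` for some `ε' ≥ ε`, then `Δγ((ε/(2S))²; x | x_1,…,x_n) > log(3/2)`. -/
theorem incrGain_gt_of_independent
    {H : Type*} [NormedAddCommGroup H] [InnerProductSpace ℝ H]
    (X : Set H) (S ε ε' : ℝ) (hS : 0 < S) (hε : 0 < ε) (hε' : ε' ≥ ε)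
    (F : Set (H → ℝ)) (hF : F ⊆ rkhsBall S)
    (x : H) (hx : x ∈ X) {n : ℕ} (xs : Fin n → H) (hxs : ∀ i, xs i ∈ X)
    (hind : ¬ epsDependent F ε' x xs) :
    incrGain ((ε / (2 * S)) ^ 2) x xs > Real.log (3 / 2) := by
  have h2S : (0:ℝ) < 2 * S := by positivity
  set lam := (ε / (2 * S)) ^ 2 with hlamdef
  have hlam : 0 < lam := by positivity
  -- extract the separating direction θ
  rw [epsDependent] at hind; push_neg at hind
  obtain ⟨f, hfF, g, hgF, hsum, hfg⟩ := hind
  obtain ⟨θ₁, hθ₁, rfl⟩ := hF hfF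
  obtain ⟨θ₂, hθ₂, rfl⟩ := hF hgF
  set θ := θ₁ - θ₂ with hθdef
  have hsum' : ∑ i, ⟪θ, xs i⟫ ^ 2 ≤ ε' ^ 2 := by
    simpa [hθdef, inner_sub_left] using hsum
  have hθx : ε' < ⟪θ, x⟫ := by
    have : ε' < ⟪θ₁, x⟫ - ⟪θ₂, x⟫ := hfg
    simpa [hθdef, inner_sub_left] using this
  have hθn : ‖θ‖ ≤ 2 * S := by
    calc ‖θ‖ ≤ ‖θ₁‖ + ‖θ₂‖ := norm_sub_le _ _
    _ ≤ 2 * S := by linarith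
  have hε'pos : 0 < ε' := lt_of_lt_of_le hε hε'
  -- matrices
  have hKpsd := gram_posSemidef xs
  set Pn := lam • (1 : Matrix (Fin n) (Fin n) ℝ) + gram xs with hPndef
  have hPnpd : Pn.PosDef := (smul_one_posDef hlam).add_posSemidef hKpsd
  set P := lam • (1 : Matrix (Fin (n+1)) (Fin (n+1)) ℝ) + gram (Fin.cons x xs) with hPdef
  have hPpd : P.PosDef := (smul_one_posDef hlam).add_posSemidef (gram_posSemidef _)
  set k : Fin n → ℝ := fun i => ⟪x, xs i⟫ with hk
  set w : Fin n → ℝ := Pn⁻¹.mulVec k with hw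
  set s : ℝ := ⟪x, x⟫ - dotProduct k w with hs
  have hdetP : P.det = Pn.det * (lam + s) := schur_det lam x xs hPnpd
  -- the linear system satisfied by w
  have hPw : Pn.mulVec w = k := by
    rw [hw, Matrix.mulVec_mulVec,
      Matrix.mul_nonsing_inv _ (isUnit_iff_ne_zero.mpr hPnpd.det_pos.ne'), Matrix.one_mulVec]
  have hPwi : ∀ i, lam * w i + ∑ j, ⟪xs i, xs j⟫ * w j = k i := by
    have h := hPw
    rw [hPndef, Matrix.add_mulVec, Matrix.smul_mulVec, Matrix.one_mulVec] at h
    intro i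
    have h2 := congrFun h i
    simpa [gram, Matrix.mulVec, dotProduct] using h2
  -- geometric quantities
  set v : H := ∑ j, w j • xs j with hv
  have hxv : ⟪x, v⟫ = ∑ j, w j * k j := by
    simp [hv, inner_sum, real_inner_smul_right, hk, mul_comm]
  have hvv : ⟪v, v⟫ = ∑ i, w i * ∑ j, ⟪xs i, xs j⟫ * w j := by
    simp [hv, sum_inner, inner_sum, real_inner_smul_left, real_inner_smul_right,
      Finset.mul_sum, mul_assoc, -inner_self_eq_norm_sq_to_K]
    exact Finset.sum_congr rfl fun a _ => Finset.sum_congr rfl fun b _ => by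
      rw [real_inner_comm (xs b) (xs a)]; ring
  have hwk : ∑ i, w i * k i = lam * (∑ i, w i ^ 2) + ⟪v, v⟫ := by
    rw [hvv, Finset.mul_sum, ← Finset.sum_add_distrib]
    refine Finset.sum_congr rfl fun i _ => ?_
    rw [← hPwi i]; ring
  set W : ℝ := ∑ i, w i ^ 2 with hW
  set b2 : ℝ := ‖x - v‖ ^ 2 with hb2
  have hWnn : 0 ≤ W := Finset.sum_nonneg fun i _ => sq_nonneg _
  have hb2nn : 0 ≤ b2 := sq_nonneg _
  have hseq : s = lam * W + b2 := by
    have hnorm : b2 = ⟪x, x⟫ - 2 * ⟪x, v⟫ + ⟪v, v⟫ := by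
      rw [hb2, norm_sub_sq_real, real_inner_self_eq_norm_sq, real_inner_self_eq_norm_sq]
    have hkw : dotProduct k w = ∑ i, w i * k i := by
      simp [dotProduct, mul_comm]
    rw [hs, hkw, hnorm, hxv]
    have := hwk
    linarith
  clear_value s w v W b2 k
  -- the key scalar estimate : s > lam / 2
  have hsplit : ⟪θ, x⟫ = ⟪θ, x - v⟫ + ⟪θ, v⟫ := by
    rw [inner_sub_right]; ring
  have hEsq : ⟪θ, x - v⟫ ^ 2 ≤ (2 * S) ^ 2 * b2 := by
    have h1 : |⟪θ, x - v⟫| ≤ ‖θ‖ * ‖x - v‖ := abs_real_inner_le_norm _ _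
    have h2 : ⟪θ, x - v⟫ ^ 2 ≤ (‖θ‖ * ‖x - v‖) ^ 2 := by
      rw [← sq_abs]; exact pow_le_pow_left₀ (abs_nonneg _) h1 2
    have h3 : (‖θ‖ * ‖x - v‖) ^ 2 ≤ ((2 * S) * ‖x - v‖) ^ 2 := by
      apply pow_le_pow_left₀ (by positivity)
      exact mul_le_mul_of_nonneg_right hθn (norm_nonneg _)
    calc ⟪θ, x - v⟫ ^ 2 ≤ ((2 * S) * ‖x - v‖) ^ 2 := le_trans h2 h3
      _ = (2 * S) ^ 2 * b2 := by rw [hb2]; ring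
  have hθv : ⟪θ, v⟫ = ∑ j, w j * ⟪θ, xs j⟫ := by
    simp [hv, inner_sum, real_inner_smul_right]
  have hGsq : ⟪θ, v⟫ ^ 2 ≤ W * ε' ^ 2 := by
    rw [hθv]
    calc (∑ j, w j * ⟪θ, xs j⟫) ^ 2
        ≤ (∑ j, w j ^ 2) * ∑ j, ⟪θ, xs j⟫ ^ 2 :=
          Finset.sum_mul_sq_le_sq_mul_sq Finset.univ _ _
      _ ≤ W * ε' ^ 2 := by
          rw [hW]
          exact mul_le_mul_of_nonneg_left hsum'
            (Finset.sum_nonneg fun i _ => sq_nonneg _)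
  clear_value θ lam Pn P
  clear hw hPw hPwi hs hxv hvv hwk hk hsum hfg hW hv hb2
  have hkey : ε' ^ 2 < 2 * ((2 * S) ^ 2 * b2) + 2 * (W * ε' ^ 2) := by
    have h1 : ε' ^ 2 < ⟪θ, x⟫ ^ 2 := by nlinarith
    have h2 : ⟪θ, x⟫ ^ 2 ≤ 2 * ⟪θ, x - v⟫ ^ 2 + 2 * ⟪θ, v⟫ ^ 2 := by
      rw [hsplit]; nlinarith [sq_nonneg (⟪θ, x - v⟫ - ⟪θ, v⟫)]
    nlinarith
  have hlam4S : lam * (2 * S) ^ 2 = ε ^ 2 := by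
    rw [hlamdef]; field_simp
  have hεε' : ε ^ 2 ≤ ε' ^ 2 := by nlinarith
  have hshalf : lam / 2 < s := by
    rw [hseq]
    -- multiply hkey by lam and use lam * (2S)^2 = ε^2 ≤ ε'^2
    have hmul : lam * ε' ^ 2 < lam * (2 * ((2 * S) ^ 2 * b2) + 2 * (W * ε' ^ 2)) :=
      mul_lt_mul_of_pos_left hkey hlam
    have hb : lam * (2 * ((2 * S) ^ 2 * b2)) ≤ 2 * ε' ^ 2 * b2 := by nlinarith
    have hε'sq : 0 < ε' ^ 2 := by positivity
    nlinarith
  -- determinant / logarithm computation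
  have hdetPn_pos : 0 < Pn.det := hPnpd.det_pos
  have hdetP_pos : 0 < P.det := hPpd.det_pos
  have hrw1 : (1 : Matrix (Fin (n+1)) (Fin (n+1)) ℝ) + lam⁻¹ • gram (Fin.cons x xs)
      = lam⁻¹ • P := by
    rw [hPdef, smul_add, smul_smul, inv_mul_cancel₀ hlam.ne', one_smul]
  have hrw2 : (1 : Matrix (Fin n) (Fin n) ℝ) + lam⁻¹ • gram xs = lam⁻¹ • Pn := by
    rw [hPndef, smul_add, smul_smul, inv_mul_cancel₀ hlam.ne', one_smul]
  have hinc : incrGain lam x xs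
      = Real.log ((lam⁻¹) ^ (n+1) * P.det) - Real.log ((lam⁻¹) ^ n * Pn.det) := by
    rw [incrGain, infoGain, infoGain, hrw1, hrw2, Matrix.det_smul, Matrix.det_smul]
    simp
  have hlaminv : 0 < lam⁻¹ := inv_pos.mpr hlam
  have hls : 0 < lam + s := by linarith
  have e1 : Real.log (lam⁻¹ ^ (n+1) * P.det)
      = ((n:ℝ)+1) * Real.log lam⁻¹ + Real.log Pn.det + Real.log (lam + s) := by
    rw [hdetP, Real.log_mul (by positivity) (by positivity),
      Real.log_mul hdetPn_pos.ne' hls.ne', Real.log_pow]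
    push_cast; ring
  have e2 : Real.log (lam⁻¹ ^ n * Pn.det)
      = (n:ℝ) * Real.log lam⁻¹ + Real.log Pn.det := by
    rw [Real.log_mul (by positivity) hdetPn_pos.ne', Real.log_pow]
  rw [hinc, e1, e2]
  have hfin : Real.log (lam + s) - Real.log lam > Real.log (3/2) := by
    rw [← Real.log_div hls.ne' hlam.ne']
    apply Real.log_lt_log (by norm_num)
    rw [lt_div_iff₀ hlam]
    linarith
  have hloginv : Real.log lam⁻¹ = - Real.log lam := Real.log_inv lam
  push_cast
  have hexp : ((n : ℝ) + 1) * Real.log lam⁻¹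
      = (n : ℝ) * Real.log lam⁻¹ + Real.log lam⁻¹ := by ring
  linarith [hfin, hexp, hloginv]
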